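/- Let s ≥ 1 be an integer, let G be a theta-free graph, let (a,S,{L}) be an (s,1)-palanquin in G and let x_L be an end of L. Assume that no two vertices in S have a common neighbor in L, and that either every x ∈ S is L-bad, or every x ∈ S is L-ugly. Then there exists a bijection π between {1,…,s} and S such that (S, L, x_L, π) is an s-alignment in G. -/

import Mathlib

open SimpleGraph

universe u v

/-- `G` contains `H` as an induced subgraph: there is a graph embedding of `H` into `G`. -/
def ContainsInduced {V : Type u} {W : Type v} (G : SimpleGraph V) (H : SimpleGraph W) : Prop :=
  Nonempty (H ↪g G)

/-- `G` has a hole (an induced cycle on at least four vertices) on `n` vertices. -/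
def HasHole {V : Type u} (G : SimpleGraph V) (n : ℕ) : Prop :=
  4 ≤ n ∧ ContainsInduced G (cycleGraph n)

/-- `G` is chordal: it has no hole. -/
def Chordal {V : Type u} (G : SimpleGraph V) : Prop :=
  ∀ n : ℕ, ¬ HasHole G n

/-- `G` is even-hole-free: it has no hole on an even number of vertices. -/
def EvenHoleFree {V : Type u} (G : SimpleGraph V) : Prop :=
  ∀ n : ℕ, Even n → ¬ HasHole G n

/-- A tree decomposition of `G`: a tree `T` together with bags indexed by the nodes of `T`,
covering all vertices and edges of `G`, such that for every vertex the set of nodes whose bag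
contains it induces a connected (hence nonempty) subgraph of `T`. -/
structure TreeDecomp {V : Type u} (G : SimpleGraph V) where
  ι : Type u
  T : SimpleGraph ι
  isTree : T.IsTree
  bag : ι → Set V
  mem_bag : ∀ v : V, ∃ i, v ∈ bag i
  edge_bag : ∀ ⦃x y : V⦄, G.Adj x y → ∃ i, x ∈ bag i ∧ y ∈ bag i
  conn : ∀ v : V, (T.induce {i | v ∈ bag i}).Connected

/-- `G` has treewidth at most `w`. -/
def TreewidthLe {V : Type u} (G : SimpleGraph V) (w : ℕ) : Prop :=
  ∃ D : TreeDecomp G, ∀ i, (D.bag i).ncard ≤ w + 1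

/-- The cone over `F`: add one new vertex adjacent to all vertices of `F`. -/
def coneGraph {α : Type u} (F : SimpleGraph α) : SimpleGraph (Option α) where
  Adj x y :=
    match x, y with
    | some a, some b => F.Adj a b
    | some _, none => True
    | none, some _ => True
    | none, none => False
  symm := by
    constructor
    rintro (_ | a) (_ | b) h
    · exact h
    · trivial
    · trivial
    · exact F.adj_symm h
  loopless := by
    constructor
    rintro (_ | a) h
    · exact h
    · exact F.ne_of_adj h rfl

/-- The diamond: `K₄` minus an edge. -/
def diamondGraph : SimpleGraph (Fin 4) :=
  (⊤ : SimpleGraph (Fin 4)).deleteEdges {s(0, 1)}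
/-- An induced path in `G` from `x` to `y`, given as an embedding of a path graph whose first
vertex is `x` and whose last vertex is `y`. -/
structure IPath {V : Type u} (G : SimpleGraph V) (x y : V) where
  n : ℕ
  pos : 0 < n
  f : pathGraph n ↪g G
  hx : f ⟨0, pos⟩ = x
  hy : f ⟨n - 1, Nat.sub_lt pos Nat.one_pos⟩ = y

namespace IPath

variable {V : Type u} {G : SimpleGraph V} {x y : V}

/-- The vertex set of the path. -/
def support (P : IPath G x y) : Set V := Set.range P.f

/-- The interior of the path: its vertices other than the two ends. -/
def interior (P : IPath G x y) : Set V :=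
  {v | ∃ i : Fin P.n, 0 < (i : ℕ) ∧ (i : ℕ) < P.n - 1 ∧ P.f i = v}

/-- The length (number of edges) of the path. -/
def length (P : IPath G x y) : ℕ := P.n - 1

end IPath

/-- An induced path in `G` (with unspecified ends). -/
structure IndPath {V : Type u} (G : SimpleGraph V) where
  n : ℕ
  pos : 0 < n
  f : pathGraph n ↪g G

namespace IndPath

variable {V : Type u} {G : SimpleGraph V}

/-- The vertex set of the path. -/
def support (P : IndPath G) : Set V := Set.range P.f

/-- The first vertex of the path. -/
def first (P : IndPath G) : V := P.f ⟨0, P.pos⟩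

/-- The last vertex of the path. -/
def last (P : IndPath G) : V := P.f ⟨P.n - 1, Nat.sub_lt P.pos Nat.one_pos⟩

end IndPath

/-- The set of neighbors of `v` lying in the set `H` (i.e. the neighbors of `v` in the
subgraph of `G` induced by `H`, for `v` possibly outside `H`). -/
def NbrsIn {V : Type u} (G : SimpleGraph V) (H : Set V) (v : V) : Set V :=
  H ∩ G.neighborSet v

/-- `v` is `H`-good: it has exactly one neighbor in `H`. -/
def GoodFor {V : Type u} (G : SimpleGraph V) (H : Set V) (v : V) : Prop :=
  (NbrsIn G H v).ncard = 1

/-- `v` is `H`-bad: its set of neighbors in `H` is a clique with at least two vertices. -/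
def BadFor {V : Type u} (G : SimpleGraph V) (H : Set V) (v : V) : Prop :=
  G.IsClique (NbrsIn G H v) ∧ 2 ≤ (NbrsIn G H v).ncard

/-- `v` is `H`-ugly: its set of neighbors in `H` is not a clique. -/
def UglyFor {V : Type u} (G : SimpleGraph V) (H : Set V) (v : V) : Prop :=
  ¬ G.IsClique (NbrsIn G H v)

/-- `A` is anticomplete to `B`: there is no edge of `G` with one end in `A` and one in `B`. -/
def Anticomplete {V : Type u} (G : SimpleGraph V) (A B : Set V) : Prop :=
  ∀ a ∈ A, ∀ b ∈ B, ¬ G.Adj a b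

/-- The data of a theta with ends `a, b` and paths `P₁, P₂, P₃`: the ends are distinct and
non-adjacent, each path has length at least two, and the interiors of the paths are pairwise
disjoint and pairwise anticomplete. -/
def ThetaWitness {V : Type u} (G : SimpleGraph V) (a b : V)
    (P₁ P₂ P₃ : IPath G a b) : Prop :=
  a ≠ b ∧ ¬ G.Adj a b ∧
  2 ≤ P₁.length ∧ 2 ≤ P₂.length ∧ 2 ≤ P₃.length ∧
  Disjoint P₁.interior P₂.interior ∧ Disjoint P₁.interior P₃.interior ∧
  Disjoint P₂.interior P₃.interior ∧
  Anticomplete G P₁.interior P₂.interior ∧ Anticomplete G P₁.interior P₃.interior ∧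
  Anticomplete G P₂.interior P₃.interior

/-- There is a theta in `G`. -/
def HasTheta {V : Type u} (G : SimpleGraph V) : Prop :=
  ∃ (a b : V) (P₁ P₂ P₃ : IPath G a b), ThetaWitness G a b P₁ P₂ P₃

/-- The data of a prism with triangles `a₁a₂a₃`, `b₁b₂b₃` and paths `P₁, P₂, P₃`, where `Pᵢ`
has ends `aᵢ, bᵢ`, the paths are pairwise disjoint, and for `i ≠ j` the only edges between
`Pᵢ` and `Pⱼ` are `aᵢaⱼ` and `bᵢbⱼ`. -/
def PrismWitness {V : Type u} (G : SimpleGraph V) (a₁ a₂ a₃ b₁ b₂ b₃ : V)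
    (P₁ : IPath G a₁ b₁) (P₂ : IPath G a₂ b₂) (P₃ : IPath G a₃ b₃) : Prop :=
  G.Adj a₁ a₂ ∧ G.Adj a₁ a₃ ∧ G.Adj a₂ a₃ ∧
  G.Adj b₁ b₂ ∧ G.Adj b₁ b₃ ∧ G.Adj b₂ b₃ ∧
  Disjoint P₁.support P₂.support ∧ Disjoint P₁.support P₃.support ∧
  Disjoint P₂.support P₃.support ∧
  (∀ u ∈ P₁.support, ∀ v_ ∈ P₂.support, G.Adj u v_ → (u = a₁ ∧ v_ = a₂) ∨ (u = b₁ ∧ v_ = b₂)) ∧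
  (∀ u ∈ P₁.support, ∀ v_ ∈ P₃.support, G.Adj u v_ → (u = a₁ ∧ v_ = a₃) ∨ (u = b₁ ∧ v_ = b₃)) ∧
  (∀ u ∈ P₂.support, ∀ v_ ∈ P₃.support, G.Adj u v_ → (u = a₂ ∧ v_ = a₃) ∨ (u = b₂ ∧ v_ = b₃))

/-- There is a prism in `G`. -/
def HasPrism {V : Type u} (G : SimpleGraph V) : Prop :=
  ∃ (a₁ a₂ a₃ b₁ b₂ b₃ : V) (P₁ : IPath G a₁ b₁) (P₂ : IPath G a₂ b₂) (P₃ : IPath G a₃ b₃),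
    PrismWitness G a₁ a₂ a₃ b₁ b₂ b₃ P₁ P₂ P₃

/-- The data of a wheel: a hole (given by an embedding `f` of a cycle on `n ≥ 4` vertices)
together with a vertex `v` outside the hole having at least three neighbors in it. -/
def WheelWitness {V : Type u} (G : SimpleGraph V) (n : ℕ) (f : cycleGraph n ↪g G)
    (v : V) : Prop :=
  4 ≤ n ∧ v ∉ Set.range f ∧ 3 ≤ (NbrsIn G (Set.range f) v).ncard

/-- There is an even wheel in `G`: a wheel whose center has an even number of neighbors
in the hole. -/
def HasEvenWheel {V : Type u} (G : SimpleGraph V) : Prop :=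
  ∃ (n : ℕ) (f : cycleGraph n ↪g G) (v : V),
    WheelWitness G n f v ∧ Even ((NbrsIn G (Set.range f) v).ncard)

/-- `G` belongs to the class `𝓔` of (C₄, theta, prism, even wheel)-free graphs. -/
def MemE {V : Type u} (G : SimpleGraph V) : Prop :=
  ¬ ContainsInduced G (cycleGraph 4) ∧ ¬ HasTheta G ∧ ¬ HasPrism G ∧ ¬ HasEvenWheel G
/-- The whole graph `G` is a theta. -/
def IsThetaGraph {V : Type u} (G : SimpleGraph V) : Prop :=
  ∃ (a b : V) (P₁ P₂ P₃ : IPath G a b), ThetaWitness G a b P₁ P₂ P₃ ∧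
    ∀ u : V, u ∈ P₁.support ∪ P₂.support ∪ P₃.support

/-- The whole graph `G` is a prism. -/
def IsPrismGraph {V : Type u} (G : SimpleGraph V) : Prop :=
  ∃ (a₁ a₂ a₃ b₁ b₂ b₃ : V) (P₁ : IPath G a₁ b₁) (P₂ : IPath G a₂ b₂) (P₃ : IPath G a₃ b₃),
    PrismWitness G a₁ a₂ a₃ b₁ b₂ b₃ P₁ P₂ P₃ ∧
    ∀ u : V, u ∈ P₁.support ∪ P₂.support ∪ P₃.support

/-- The whole graph `G` is (the graph of) an even wheel. -/
def IsEvenWheelGraph {V : Type u} (G : SimpleGraph V) : Prop :=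
  ∃ (n : ℕ) (f : cycleGraph n ↪g G) (v : V),
    WheelWitness G n f v ∧ Even ((NbrsIn G (Set.range f) v).ncard) ∧
    ∀ u : V, u ∈ insert v (Set.range f)

/-- The graph `G△^{z₁}_{z₂}`: delete `z₁` and `z₂` and add a new vertex (represented by
`none`) whose neighborhood is exactly `N_G(z₁) ∩ N_G(z₂)`. -/
def triMinor {V : Type u} (G : SimpleGraph V) (z₁ z₂ : V) :
    SimpleGraph (Option {v : V // v ≠ z₁ ∧ v ≠ z₂}) where
  Adj x y :=
    match x, y with
    | some a, some b => G.Adj a b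
    | some a, none => G.Adj z₁ a ∧ G.Adj z₂ a
    | none, some b => G.Adj z₁ b ∧ G.Adj z₂ b
    | none, none => False
  symm := by
    constructor
    rintro (_ | a) (_ | b) h
    · exact h
    · exact h
    · exact h
    · exact G.adj_symm h
  loopless := by
    constructor
    rintro (_ | a) h
    · exact h
    · exact G.ne_of_adj h rfl

/-- `v` is a `d`-substantial vertex of `G`: there is a hole `C` of `G ∖ {v}` in which `v`
has at least `d + 1` neighbors and such that `C ∖ N_C(v)` is disconnected. -/
def Substantial {V : Type u} (G : SimpleGraph V) (d : ℕ) (v : V) : Prop :=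
  ∃ (n : ℕ) (f : cycleGraph n ↪g G), 4 ≤ n ∧ v ∉ Set.range f ∧
    d + 1 ≤ (NbrsIn G (Set.range f) v).ncard ∧
    ¬ (G.induce (Set.range f \ G.neighborSet v)).Connected

/-- A `w`-kaleidoscope `(a, x, y, 𝒲)` in `G`: `x–a–y` is an induced path, `𝒲` is a family of
`w` pairwise internally disjoint induced paths from `x` to `y` avoiding `a`, and `a` is
anticomplete to the interior of every path of the family. -/
structure Kaleidoscope {V : Type u} (G : SimpleGraph V) (w : ℕ) where
  a : V
  x : V
  y : V
  hxy : x ≠ y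
  hnadj : ¬ G.Adj x y
  hax : G.Adj a x
  hay : G.Adj a y
  W : Fin w → IPath G x y
  notA : ∀ i, a ∉ (W i).support
  intDisj : ∀ i j, i ≠ j → Disjoint (W i).interior (W j).interior
  aAnti : ∀ i, ∀ u ∈ (W i).interior, ¬ G.Adj a u

/-- Restriction of a kaleidoscope to the subfamily of paths indexed by an injection `g`. -/
def Kaleidoscope.restrict {V : Type u} {G : SimpleGraph V} {k w : ℕ}
    (K : Kaleidoscope G k) (g : Fin w → Fin k) (hg : Function.Injective g) :
    Kaleidoscope G w where
  a := K.a
  x := K.x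
  y := K.y
  hxy := K.hxy
  hnadj := K.hnadj
  hax := K.hax
  hay := K.hay
  W := fun i => K.W (g i)
  notA := fun i => K.notA (g i)
  intDisj := fun i j hij => K.intDisj (g i) (g j) (fun e => hij (hg e))
  aAnti := fun i => K.aAnti (g i)

/-- The set `Z` is `d`-mirrored by the kaleidoscope `K = (a, x, y, 𝒲)`: `Z` avoids `a` and
all paths of `𝒲`; `a` has at most one neighbor in `Z`; and every `z ∈ Z` is anticomplete to
`N_W[x] ∪ N_W[y]` and has at least `d` neighbors in `W`, for every `W ∈ 𝒲`. -/
def Mirrored {V : Type u} (G : SimpleGraph V) {w : ℕ} (K : Kaleidoscope G w) (d : ℕ)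
    (Z : Set V) : Prop :=
  K.a ∉ Z ∧
  (∀ i, ∀ z ∈ Z, z ∉ (K.W i).support) ∧
  (Z ∩ G.neighborSet K.a).ncard ≤ 1 ∧
  ∀ z ∈ Z, ∀ i,
    (∀ u ∈ insert K.x (NbrsIn G (K.W i).support K.x) ∪
        insert K.y (NbrsIn G (K.W i).support K.y), ¬ G.Adj z u) ∧
    d ≤ (NbrsIn G (K.W i).support z).ncard
/-- An `(s, l)`-palanquin `(a, S, ℒ)` in `G`: `S` is a stable set of `s` neighbors of `a`,
and `ℒ` is a family of `l` pairwise disjoint induced paths, all avoiding `S ∪ {a}`, such that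
`a` is anticomplete to every path of `ℒ` and every vertex of `S` has a neighbor in every
path of `ℒ`. -/
structure Palanquin {V : Type u} (G : SimpleGraph V) (s l : ℕ) where
  a : V
  S : Set V
  L : Fin l → IndPath G
  sub : S ⊆ G.neighborSet a
  stable : ∀ u ∈ S, ∀ w ∈ S, ¬ G.Adj u w
  card : S.ncard = s
  disj : ∀ i j, i ≠ j → Disjoint (L i).support (L j).support
  avoid : ∀ i, Disjoint (L i).support (insert a S)
  anti : ∀ i, ∀ u ∈ (L i).support, ¬ G.Adj a u
  nbr : ∀ x ∈ S, ∀ i, ∃ u ∈ (L i).support, G.Adj x u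

/-- The ordering condition of an alignment: for `i < j`, all neighbors of `π i` on the path
appear strictly before all neighbors of `π j`, positions being counted from the first vertex
of `P` if `rev = false`, and from the last vertex if `rev = true`. -/
def AlignOrder {V : Type u} (G : SimpleGraph V) {s : ℕ} (P : IndPath G)
    (π : Fin s → V) (rev : Bool) : Prop :=
  ∀ i j : Fin s, i < j → ∀ ii jj : Fin P.n,
    G.Adj (π i) (P.f ii) → G.Adj (π j) (P.f jj) →
    (if rev then (jj : ℕ) < (ii : ℕ) else (ii : ℕ) < (jj : ℕ))

/-- `(S, P, x, π)` is an `s`-alignment in `G`: `S` is a stable set of size `s` enumerated by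
the bijection `π`, the induced path `P` avoids `S`, has `x` as an end, every vertex of `S`
has a neighbor in `P`, and traversing `P` starting at `x`, for `i < j` all neighbors of
`π i` appear strictly before all neighbors of `π j`. -/
def IsAlignment {V : Type u} (G : SimpleGraph V) (s : ℕ) (S : Set V) (P : IndPath G)
    (x : V) (π : Fin s → V) : Prop :=
  (∀ u ∈ S, ∀ w ∈ S, ¬ G.Adj u w) ∧ S.ncard = s ∧
  Function.Injective π ∧ Set.range π = S ∧
  Disjoint S P.support ∧
  (∀ u ∈ S, ∃ w ∈ P.support, G.Adj u w) ∧
  ((x = P.first ∧ AlignOrder G P π false) ∨ (x = P.last ∧ AlignOrder G P π true))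

/-- `N` is a `k`-tree: either a complete graph on `k` vertices, or a graph on `h > k`
vertices admitting a bijection onto `{0, …, h-1}` such that every vertex among the first
`h - k` has its set of forward neighbors a clique of exactly `k` vertices. -/
def IsKTree {α : Type u} [Fintype α] (k : ℕ) (N : SimpleGraph α) : Prop :=
  (Fintype.card α = k ∧ N = ⊤) ∨
  (k < Fintype.card α ∧ ∃ e : α ≃ Fin (Fintype.card α),
    ∀ w : α, (e w : ℕ) < Fintype.card α - k →
      N.IsClique {u | N.Adj w u ∧ e w < e u} ∧ {u | N.Adj w u ∧ e w < e u}.ncard = k)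

/-- `N`, a graph on `Fin m`, is a `k`-tree whose defining ordering is the natural order of
`Fin m`. -/
def IsOrderedKTree (k m : ℕ) (N : SimpleGraph (Fin m)) : Prop :=
  (m = k ∧ N = ⊤) ∨
  (k < m ∧ ∀ i : Fin m, (i : ℕ) < m - k →
    N.IsClique {j | N.Adj i j ∧ i < j} ∧ {j | N.Adj i j ∧ i < j}.ncard = k)

/-- The set `S` is (the vertex set of) a blurry copy of the ordered `2`-tree `N` in `G`:
there is an enumeration `e` of `S` such that the copy `Y` of `N` transported along `e` is a
spanning subgraph of `G[S]`, and whenever `i < j` and `e i, e j` are adjacent in `G` but not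
in `Y`, the vertex `e j` is adjacent in `G` to both forward neighbors of `e i` in `Y`. -/
def BlurryCopy {V : Type u} {m : ℕ} (G : SimpleGraph V) (N : SimpleGraph (Fin m))
    (S : Set V) : Prop :=
  ∃ e : Fin m → V, Function.Injective e ∧ Set.range e = S ∧
    (∀ i j : Fin m, N.Adj i j → G.Adj (e i) (e j)) ∧
    (∀ i j : Fin m, i < j → G.Adj (e i) (e j) → ¬ N.Adj i j →
      ∀ k : Fin m, N.Adj i k → i < k → G.Adj (e j) (e k))

section Helpers


variable {V : Type} {G : SimpleGraph V}

/-- A function listing the vertices of an induced path. -/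
def IndWitness (G : SimpleGraph V) (m : ℕ) (g : Fin m → V) : Prop :=
  Function.Injective g ∧
    ∀ i j : Fin m, G.Adj (g i) (g j) ↔ ((i : ℕ) + 1 = (j : ℕ) ∨ (j : ℕ) + 1 = (i : ℕ))

def IndWitness.emb {m : ℕ} {g : Fin m → V} (h : IndWitness G m g) :
    pathGraph m ↪g G where
  toFun := g
  inj' := h.1
  map_rel_iff' := by
    intro i j
    rw [pathGraph_adj]
    exact h.2 i j

def IndWitness.path {m : ℕ} {g : Fin m → V} (h : IndWitness G m g) (hm : 0 < m)
    {x y : V} (hx : g ⟨0, hm⟩ = x) (hy : g ⟨m - 1, Nat.sub_lt hm Nat.one_pos⟩ = y) :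
    IPath G x y :=
  ⟨m, hm, h.emb, hx, hy⟩

lemma IndWitness.path_interior {m : ℕ} {g : Fin m → V} (h : IndWitness G m g) (hm : 0 < m)
    {x y : V} (hx : g ⟨0, hm⟩ = x) (hy : g ⟨m - 1, Nat.sub_lt hm Nat.one_pos⟩ = y) :
    (h.path hm hx hy).interior = {v | ∃ i : Fin m, 0 < (i : ℕ) ∧ (i : ℕ) < m - 1 ∧ g i = v} :=
  rfl

lemma IndWitness.path_length {m : ℕ} {g : Fin m → V} (h : IndWitness G m g) (hm : 0 < m)
    {x y : V} (hx : g ⟨0, hm⟩ = x) (hy : g ⟨m - 1, Nat.sub_lt hm Nat.one_pos⟩ = y) :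
    (h.path hm hx hy).length = m - 1 :=
  rfl

/-- Reversal automorphism of the path graph. -/
def pathGraphRev (m : ℕ) : pathGraph m ≃g pathGraph m where
  toEquiv :=
    { toFun := fun i => ⟨m - 1 - (i : ℕ), by have := i.isLt; omega⟩
      invFun := fun i => ⟨m - 1 - (i : ℕ), by have := i.isLt; omega⟩
      left_inv := fun i => by ext; have := i.isLt; simp; omega
      right_inv := fun i => by ext; have := i.isLt; simp; omega }
  map_rel_iff' := by
    intro i j
    have hi := i.isLt; have hj := j.isLt
    simp only [Equiv.coe_fn_mk, pathGraph_adj]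
    omega

/-- Reverse of an induced path. -/
lemma IPath.exists_rev {x y : V} (P : IPath G x y) :
    ∃ Q : IPath G y x, Q.interior = P.interior ∧ Q.length = P.length := by
  set e := (pathGraphRev P.n).toEmbedding with hedef
  have happ : ∀ i, (P.f.comp e) i = P.f (e i) := fun _ => rfl
  have he : ∀ i : Fin P.n, (e i : ℕ) = P.n - 1 - (i : ℕ) := fun i => rfl
  have hrev0 : e ⟨0, P.pos⟩ = ⟨P.n - 1, Nat.sub_lt P.pos Nat.one_pos⟩ := by
    ext; rw [he]; simp
  have hrevl : e ⟨P.n - 1, Nat.sub_lt P.pos Nat.one_pos⟩ = ⟨0, P.pos⟩ := by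
    ext; rw [he]; simp
  refine ⟨⟨P.n, P.pos, P.f.comp e, ?_, ?_⟩, ?_, rfl⟩
  · rw [happ, hrev0, P.hy]
  · rw [happ, hrevl, P.hx]
  · ext v
    simp only [IPath.interior, Set.mem_setOf_eq]
    constructor
    · rintro ⟨i, h1, h2, hv⟩
      have hi := i.isLt
      refine ⟨e i, by rw [he]; omega, by rw [he]; omega, ?_⟩
      rw [← happ]; exact hv
    · rintro ⟨j, h1, h2, hv⟩
      have hj := j.isLt
      refine ⟨⟨P.n - 1 - (j : ℕ), by omega⟩, by simp; omega, by simp; omega, ?_⟩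
      rw [happ]
      have : e ⟨P.n - 1 - (j : ℕ), by omega⟩ = j := by
        ext; rw [he]; simp; omega
      rw [this]; exact hv


lemma exists_path3 {v0 v1 v2 : V} (h01 : G.Adj v0 v1) (h12 : G.Adj v1 v2)
    (h02 : ¬ G.Adj v0 v2) (hne : v0 ≠ v2) :
    ∃ P : IPath G v0 v2, P.interior = {v1} ∧ P.length = 2 := by
  have hw : IndWitness G 3 ![v0, v1, v2] := by
    constructor
    · intro i j hij
      fin_cases i <;> fin_cases j <;>
        simp_all [h01.ne, h12.ne, hne] <;> rfl
    · intro i j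
      fin_cases i <;> fin_cases j <;>
        simp [h01, h12, h02, h01.symm, h12.symm, G.irrefl, fun h => h02 (G.adj_symm h), G.adj_comm v2 v0]
  refine ⟨hw.path (Nat.succ_pos 2) rfl rfl, ?_, rfl⟩
  change {v | ∃ i : Fin 3, 0 < (i : ℕ) ∧ (i : ℕ) < 3 - 1 ∧ ![v0, v1, v2] i = v} = _
  ext v
  simp only [Set.mem_setOf_eq, Set.mem_singleton_iff]
  constructor
  · rintro ⟨i, h1, h2, rfl⟩
    fin_cases i <;> simp_all <;> rfl
  · rintro rfl
    exact ⟨1, by norm_num, by norm_num, rfl⟩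

lemma exists_path4 {v0 v1 v2 v3 : V} (h01 : G.Adj v0 v1) (h12 : G.Adj v1 v2)
    (h23 : G.Adj v2 v3) (h02 : ¬ G.Adj v0 v2) (h03 : ¬ G.Adj v0 v3) (h13 : ¬ G.Adj v1 v3)
    (hne02 : v0 ≠ v2) (hne03 : v0 ≠ v3) (hne13 : v1 ≠ v3) :
    ∃ P : IPath G v0 v3, P.interior = {v1, v2} ∧ P.length = 3 := by
  have hw : IndWitness G 4 ![v0, v1, v2, v3] := by
    constructor
    · intro i j hij
      fin_cases i <;> fin_cases j <;>
        simp_all [h01.ne, h12.ne, h23.ne, hne02, hne03, hne13] <;> rfl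
    · intro i j
      fin_cases i <;> fin_cases j <;>
        simp [h01, h12, h23, h02, h03, h13, h01.symm, h12.symm, h23.symm, G.irrefl,
          fun h => h02 (G.adj_symm h), fun h => h03 (G.adj_symm h), fun h => h13 (G.adj_symm h), G.adj_comm v2 v0, G.adj_comm v3 v0, G.adj_comm v3 v1]
  refine ⟨hw.path (Nat.succ_pos 3) rfl rfl, ?_, rfl⟩
  change {v | ∃ i : Fin 4, 0 < (i : ℕ) ∧ (i : ℕ) < 4 - 1 ∧ ![v0, v1, v2, v3] i = v} = _
  ext v
  simp only [Set.mem_setOf_eq, Set.mem_insert_iff, Set.mem_singleton_iff]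
  constructor
  · rintro ⟨i, h1, h2, rfl⟩
    fin_cases i <;> simp_all <;> tauto
  · rintro (rfl | rfl)
    · exact ⟨1, by norm_num, by norm_num, rfl⟩
    · exact ⟨2, by norm_num, by norm_num, rfl⟩

/-- Path of the form `u, f α, f (α+1), …, f β, w`. -/
lemma exists_path_seg {n : ℕ} (f : pathGraph n ↪g G) (u w : V) (α β : ℕ)
    (hαβ : α ≤ β) (hβ : β < n)
    (hfu : ∀ i : Fin n, f i ≠ u) (hfw : ∀ i : Fin n, f i ≠ w)
    (hune : u ≠ w) (huw : ¬ G.Adj u w)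
    (hu : G.Adj u (f ⟨α, by omega⟩))
    (hu' : ∀ i : Fin n, α < (i : ℕ) → (i : ℕ) ≤ β → ¬ G.Adj u (f i))
    (hw : G.Adj w (f ⟨β, hβ⟩))
    (hw' : ∀ i : Fin n, α ≤ (i : ℕ) → (i : ℕ) < β → ¬ G.Adj w (f i)) :
    ∃ P : IPath G u w, 2 ≤ P.length ∧
      ∀ v, v ∈ P.interior ↔ ∃ i : Fin n, α ≤ (i : ℕ) ∧ (i : ℕ) ≤ β ∧ f i = v := by
  have key : ∀ i j : Fin n, G.Adj (f i) (f j) ↔ ((i : ℕ) + 1 = (j : ℕ) ∨ (j : ℕ) + 1 = (i : ℕ)) := by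
    intro i j
    rw [f.map_rel_iff, pathGraph_adj]
  have hfinj : Function.Injective f := f.injective
  set m := β - α + 3 with hm
  set g : Fin m → V := fun i =>
    if h0 : (i : ℕ) = 0 then u
    else if h1 : (i : ℕ) = m - 1 then w
    else f ⟨α + (i : ℕ) - 1, by have := i.isLt; omega⟩ with hg
  have hg0 : ∀ i : Fin m, (i : ℕ) = 0 → g i = u := by
    intro i h; simp only [hg]; rw [dif_pos h]
  have hgl : ∀ i : Fin m, (i : ℕ) = m - 1 → g i = w := by
    intro i h; simp only [hg]; rw [dif_neg (by omega), dif_pos h]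
  have hgmid : ∀ (i : Fin m), 0 < (i : ℕ) → (i : ℕ) < m - 1 → ∀ (hb : α + (i : ℕ) - 1 < n),
      g i = f ⟨α + (i : ℕ) - 1, hb⟩ := by
    intro i h0 h1 hb
    simp only [hg]
    rw [dif_neg (by omega), dif_neg (by omega)]
  have hadj : ∀ i j : Fin m, (i : ℕ) < (j : ℕ) → (G.Adj (g i) (g j) ↔ (i : ℕ) + 1 = (j : ℕ)) := by
    intro i j hij
    have hi := i.isLt; have hj := j.isLt
    rcases Nat.eq_zero_or_pos (i : ℕ) with hi0 | hi0
    · rw [hg0 i hi0]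
      rcases eq_or_lt_of_le (Nat.le_sub_one_of_lt hj) with hjl | hjl
      · rw [hgl j hjl]
        constructor
        · intro h; exact absurd h huw
        · intro h; omega
      · rw [hgmid j (by omega) (by omega) (by omega)]
        constructor
        · intro h
          by_contra hne1
          exact hu' _ (by simp; omega) (by simp; omega) h
        · intro h
          have he : (⟨α + (j : ℕ) - 1, by omega⟩ : Fin n) = ⟨α, by omega⟩ := by
            ext; simp; omega
          rw [he]; exact hu
    · rw [hgmid i (by omega) (by omega) (by omega)]
      rcases eq_or_lt_of_le (Nat.le_sub_one_of_lt hj) with hjl | hjl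
      · rw [hgl j hjl]
        rw [G.adj_comm]
        constructor
        · intro h
          by_contra hne1
          exact hw' _ (by simp; omega) (by simp; omega) h
        · intro h
          have he : (⟨α + (i : ℕ) - 1, by omega⟩ : Fin n) = ⟨β, hβ⟩ := by
            ext; simp; omega
          rw [he]; exact hw
      · rw [hgmid j (by omega) (by omega) (by omega), key]
        simp only [Fin.mk.injEq] at *
        constructor <;> intro h <;> omega
  have hwit : IndWitness G m g := by
    constructor
    · intro i j hij
      by_contra hne
      have hne' : (i : ℕ) ≠ (j : ℕ) := fun h => hne (Fin.ext h)
      have main : ∀ i j : Fin m, (i : ℕ) < (j : ℕ) → g i ≠ g j := by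
        intro i j hij'
        have hi := i.isLt; have hj := j.isLt
        rcases Nat.eq_zero_or_pos (i : ℕ) with hi0 | hi0
        · rw [hg0 i hi0]
          rcases eq_or_lt_of_le (Nat.le_sub_one_of_lt hj) with hjl | hjl
          · rw [hgl j hjl]; exact hune
          · rw [hgmid j (by omega) (by omega) (by omega)]
            exact fun h => hfu _ h.symm
        · rw [hgmid i (by omega) (by omega) (by omega)]
          rcases eq_or_lt_of_le (Nat.le_sub_one_of_lt hj) with hjl | hjl
          · rw [hgl j hjl]
            exact hfw _
          · rw [hgmid j (by omega) (by omega) (by omega)]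
            intro h
            have := hfinj h
            simp only [Fin.mk.injEq] at this
            omega
      rcases lt_or_gt_of_ne hne' with h | h
      · exact main i j h hij
      · exact main j i h hij.symm
    · intro i j
      rcases lt_trichotomy ((i : ℕ)) ((j : ℕ)) with h | h | h
      · rw [hadj i j h]
        constructor
        · intro h'; left; exact h'
        · rintro (h' | h')
          · exact h'
          · omega
      · have : i = j := Fin.ext h
        subst this
        simp only [G.irrefl, false_iff]
        omega
      · rw [G.adj_comm, hadj j i h]
        constructor
        · intro h'; right; exact h'
        · rintro (h' | h')
          · omega
          · exact h'
  refine ⟨hwit.path (by omega) (hg0 _ rfl) (hgl _ rfl), by rw [hwit.path_length]; omega, ?_⟩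
  intro v
  rw [hwit.path_interior]
  simp only [Set.mem_setOf_eq]
  constructor
  · rintro ⟨i, h1, h2, hv⟩
    have hi := i.isLt
    rw [hgmid i (by omega) (by omega) (by omega)] at hv
    exact ⟨⟨α + (i : ℕ) - 1, by omega⟩, by simp; omega, by simp; omega, hv⟩
  · rintro ⟨i, h1, h2, hv⟩
    refine ⟨⟨(i : ℕ) - α + 1, by omega⟩, by simp, by simp; omega, ?_⟩
    rw [hgmid _ (by simp) (by simp; omega) (by simp; omega)]
    have he : (⟨α + ((⟨(i : ℕ) - α + 1, by omega⟩ : Fin m) : ℕ) - 1, by simp; omega⟩ : Fin n) = i := by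
      ext; simp; omega
    rw [he]; exact hv

/-- Path of the form `u, f α, f (α+1), …, f β`. -/
lemma exists_path_seg_end {n : ℕ} (f : pathGraph n ↪g G) (u : V) (α β : ℕ)
    (hαβ : α ≤ β) (hβ : β < n)
    (hfu : ∀ i : Fin n, f i ≠ u)
    (hu : G.Adj u (f ⟨α, by omega⟩))
    (hu' : ∀ i : Fin n, α < (i : ℕ) → (i : ℕ) ≤ β → ¬ G.Adj u (f i))
    {y : V} (hy : f ⟨β, hβ⟩ = y) :
    ∃ P : IPath G u y, P.length = β - α + 1 ∧
      ∀ v, v ∈ P.interior ↔ ∃ i : Fin n, α ≤ (i : ℕ) ∧ (i : ℕ) < β ∧ f i = v := by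
  have key : ∀ i j : Fin n, G.Adj (f i) (f j) ↔ ((i : ℕ) + 1 = (j : ℕ) ∨ (j : ℕ) + 1 = (i : ℕ)) := by
    intro i j
    rw [f.map_rel_iff, pathGraph_adj]
  have hfinj : Function.Injective f := f.injective
  set m := β - α + 2 with hm
  set g : Fin m → V := fun i =>
    if h0 : (i : ℕ) = 0 then u
    else f ⟨α + (i : ℕ) - 1, by have := i.isLt; omega⟩ with hg
  have hg0 : ∀ i : Fin m, (i : ℕ) = 0 → g i = u := by
    intro i h; simp only [hg]; rw [dif_pos h]
  have hgmid : ∀ (i : Fin m), 0 < (i : ℕ) → ∀ (hb : α + (i : ℕ) - 1 < n),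
      g i = f ⟨α + (i : ℕ) - 1, hb⟩ := by
    intro i h0 hb
    simp only [hg]
    rw [dif_neg (by omega)]
  have hadj : ∀ i j : Fin m, (i : ℕ) < (j : ℕ) → (G.Adj (g i) (g j) ↔ (i : ℕ) + 1 = (j : ℕ)) := by
    intro i j hij
    have hi := i.isLt; have hj := j.isLt
    rcases Nat.eq_zero_or_pos (i : ℕ) with hi0 | hi0
    · rw [hg0 i hi0, hgmid j (by omega) (by omega)]
      constructor
      · intro h
        by_contra hne1
        exact hu' _ (by simp; omega) (by simp; omega) h
      · intro h
        have he : (⟨α + (j : ℕ) - 1, by omega⟩ : Fin n) = ⟨α, by omega⟩ := by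
          ext; simp; omega
        rw [he]; exact hu
    · rw [hgmid i (by omega) (by omega), hgmid j (by omega) (by omega), key]
      simp only [Fin.mk.injEq] at *
      constructor <;> intro h <;> omega
  have hwit : IndWitness G m g := by
    constructor
    · intro i j hij
      by_contra hne
      have hne' : (i : ℕ) ≠ (j : ℕ) := fun h => hne (Fin.ext h)
      have main : ∀ i j : Fin m, (i : ℕ) < (j : ℕ) → g i ≠ g j := by
        intro i j hij'
        have hi := i.isLt; have hj := j.isLt
        rcases Nat.eq_zero_or_pos (i : ℕ) with hi0 | hi0
        · rw [hg0 i hi0, hgmid j (by omega) (by omega)]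
          exact fun h => hfu _ h.symm
        · rw [hgmid i (by omega) (by omega), hgmid j (by omega) (by omega)]
          intro h
          have := hfinj h
          simp only [Fin.mk.injEq] at this
          omega
      rcases lt_or_gt_of_ne hne' with h | h
      · exact main i j h hij
      · exact main j i h hij.symm
    · intro i j
      rcases lt_trichotomy ((i : ℕ)) ((j : ℕ)) with h | h | h
      · rw [hadj i j h]
        constructor
        · intro h'; left; exact h'
        · rintro (h' | h')
          · exact h'
          · omega
      · have : i = j := Fin.ext h
        subst this
        simp only [G.irrefl, false_iff]
        omega
      · rw [G.adj_comm, hadj j i h]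
        constructor
        · intro h'; right; exact h'
        · rintro (h' | h')
          · omega
          · exact h'
  have hglast : g ⟨m - 1, by omega⟩ = f ⟨β, hβ⟩ := by
    rw [hgmid _ (by show (0:ℕ) < m - 1; omega) (by show α + (m-1) - 1 < n; omega)]
    congr 1
    ext; simp; omega
  refine ⟨hwit.path (by omega) (hg0 _ rfl) (hglast.trans hy), by rw [hwit.path_length]; omega, ?_⟩
  intro v
  rw [hwit.path_interior]
  simp only [Set.mem_setOf_eq]
  constructor
  · rintro ⟨i, h1, h2, hv⟩
    have hi := i.isLt
    rw [hgmid i (by omega) (by omega)] at hv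
    exact ⟨⟨α + (i : ℕ) - 1, by omega⟩, by simp; omega, by simp; omega, hv⟩
  · rintro ⟨i, h1, h2, hv⟩
    refine ⟨⟨(i : ℕ) - α + 1, by omega⟩, by simp, by simp; omega, ?_⟩
    rw [hgmid _ (by simp)]
    swap
    · simp; omega
    have he : (⟨α + ((⟨(i : ℕ) - α + 1, by omega⟩ : Fin m) : ℕ) - 1, by simp; omega⟩ : Fin n) = i := by
      ext; simp; omega
    rw [he]; exact hv

lemma theta_of_segments {n : ℕ} (f : pathGraph n ↪g G) (a u w : V)
    (hfa : ∀ i : Fin n, f i ≠ a)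
    (hanti : ∀ i : Fin n, ¬ G.Adj a (f i))
    (hau : G.Adj a u) (haw : G.Adj a w) (huw : ¬ G.Adj u w) (hne : u ≠ w)
    (α₂ β₂ α₃ β₃ : ℕ) (hsep : β₂ + 2 ≤ α₃)
    (P2 P3 : IPath G u w) (hl2 : 2 ≤ P2.length) (hl3 : 2 ≤ P3.length)
    (hd2 : ∀ v, v ∈ P2.interior ↔ ∃ i : Fin n, α₂ ≤ (i : ℕ) ∧ (i : ℕ) ≤ β₂ ∧ f i = v)
    (hd3 : ∀ v, v ∈ P3.interior ↔ ∃ i : Fin n, α₃ ≤ (i : ℕ) ∧ (i : ℕ) ≤ β₃ ∧ f i = v) :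
    HasTheta G := by
  have key : ∀ i j : Fin n, G.Adj (f i) (f j) ↔ ((i : ℕ) + 1 = (j : ℕ) ∨ (j : ℕ) + 1 = (i : ℕ)) := by
    intro i j
    rw [f.map_rel_iff, pathGraph_adj]
  obtain ⟨P1, h1int, h1len⟩ := exists_path3 (G := G) hau.symm haw huw hne
  refine ⟨u, w, P1, P2, P3, hne, huw, by rw [h1len], hl2, hl3, ?_, ?_, ?_, ?_, ?_, ?_⟩
  · rw [h1int, Set.disjoint_left]
    rintro v rfl hv2
    obtain ⟨i, _, _, hv⟩ := (hd2 _).1 hv2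
    exact hfa i hv
  · rw [h1int, Set.disjoint_left]
    rintro v rfl hv3
    obtain ⟨i, _, _, hv⟩ := (hd3 _).1 hv3
    exact hfa i hv
  · rw [Set.disjoint_left]
    intro v hv2 hv3
    obtain ⟨i, hi1, hi2, hv⟩ := (hd2 _).1 hv2
    obtain ⟨j, hj1, hj2, hv'⟩ := (hd3 _).1 hv3
    have : i = j := f.injective (hv.trans hv'.symm)
    subst this
    omega
  · rw [h1int]
    rintro x rfl y hy
    obtain ⟨i, _, _, hv⟩ := (hd2 _).1 hy
    rw [← hv]
    exact hanti i
  · rw [h1int]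
    rintro x rfl y hy
    obtain ⟨i, _, _, hv⟩ := (hd3 _).1 hy
    rw [← hv]
    exact hanti i
  · intro x hx y hy
    obtain ⟨i, hi1, hi2, hv⟩ := (hd2 _).1 hx
    obtain ⟨j, hj1, hj2, hv'⟩ := (hd3 _).1 hy
    rw [← hv, ← hv', key]
    omega

lemma cross_theta_right {n : ℕ} (f : pathGraph n ↪g G) (a u w : V)
    (hfa : ∀ i : Fin n, f i ≠ a) (hfu : ∀ i : Fin n, f i ≠ u) (hfw : ∀ i : Fin n, f i ≠ w)
    (hanti : ∀ i : Fin n, ¬ G.Adj a (f i))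
    (hau : G.Adj a u) (haw : G.Adj a w) (huw : ¬ G.Adj u w) (hne : u ≠ w)
    (hdisj : ∀ i : Fin n, ¬ (G.Adj u (f i) ∧ G.Adj w (f i)))
    (p q : Fin n) (hpq : (p : ℕ) < q)
    (hup : G.Adj u (f p)) (hwq : G.Adj w (f q))
    (hr : ∃ i : Fin n, G.Adj u (f i) ∧ (q : ℕ) < i)
    (hW : (∃ j : Fin n, G.Adj w (f j) ∧ ∃ i : Fin n, G.Adj u (f i) ∧ (q : ℕ) < i ∧ (i : ℕ) < j) ∨
          (∃ j : Fin n, G.Adj w (f j) ∧ (q : ℕ) + 2 ≤ j ∧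
            ∀ i : Fin n, G.Adj u (f i) → ¬ ((q : ℕ) < i ∧ (i : ℕ) < j))) :
    HasTheta G := by
  classical
  have key : ∀ i j : Fin n, G.Adj (f i) (f j) ↔ ((i : ℕ) + 1 = (j : ℕ) ∨ (j : ℕ) + 1 = (i : ℕ)) := by
    intro i j
    rw [f.map_rel_iff, pathGraph_adj]
  have hvalinj : ∀ i j : Fin n, (i : ℕ) = (j : ℕ) → i = j := fun i j h => Fin.ext h
  -- R : first u-neighbour after q
  have hRne : (Finset.univ.filter (fun i : Fin n => G.Adj u (f i) ∧ (q : ℕ) < i)).Nonempty := by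
    obtain ⟨i, h1, h2⟩ := hr
    exact ⟨i, Finset.mem_filter.2 ⟨Finset.mem_univ _, h1, h2⟩⟩
  set R := (Finset.univ.filter (fun i : Fin n => G.Adj u (f i) ∧ (q : ℕ) < i)).min' hRne with hRdef
  have hRspec : G.Adj u (f R) ∧ (q : ℕ) < R :=
    (Finset.mem_filter.1 (Finset.min'_mem _ hRne)).2
  have hRadj := hRspec.1
  have hRq := hRspec.2
  have hRmin : ∀ i : Fin n, G.Adj u (f i) → (q : ℕ) < i → (R : ℕ) ≤ i := by
    intro i h1 h2
    have hm : i ∈ Finset.univ.filter (fun i : Fin n => G.Adj u (f i) ∧ (q : ℕ) < i) :=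
      Finset.mem_filter.2 ⟨Finset.mem_univ _, h1, h2⟩
    exact Finset.min'_le _ _ hm
  -- P : last u-neighbour before q
  have hPne : (Finset.univ.filter (fun i : Fin n => G.Adj u (f i) ∧ (i : ℕ) < q)).Nonempty := by
    exact ⟨p, Finset.mem_filter.2 ⟨Finset.mem_univ _, hup, hpq⟩⟩
  set Pp := (Finset.univ.filter (fun i : Fin n => G.Adj u (f i) ∧ (i : ℕ) < q)).max' hPne with hPdef
  have hPspec : G.Adj u (f Pp) ∧ (Pp : ℕ) < q :=
    (Finset.mem_filter.1 (Finset.max'_mem _ hPne)).2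
  have hPadj := hPspec.1
  have hPq := hPspec.2
  have hPmax : ∀ i : Fin n, G.Adj u (f i) → (i : ℕ) < q → (i : ℕ) ≤ Pp := by
    intro i h1 h2
    have hm : i ∈ Finset.univ.filter (fun i : Fin n => G.Adj u (f i) ∧ (i : ℕ) < q) :=
      Finset.mem_filter.2 ⟨Finset.mem_univ _, h1, h2⟩
    exact Finset.le_max' _ _ hm
  -- the gap of u around q
  have gap : ∀ i : Fin n, G.Adj u (f i) → (Pp : ℕ) < i → (i : ℕ) < R → False := by
    intro i h1 h2 h3
    rcases lt_trichotomy ((i : ℕ)) ((q : ℕ)) with h | h | h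
    · exact absurd (hPmax i h1 h) (by omega)
    · have hiq : i = q := hvalinj i q h
      rw [hiq] at h1
      exact hdisj q ⟨h1, hwq⟩
    · exact absurd (hRmin i h1 h) (by omega)
  -- Qm : first w-neighbour in the gap
  have hBne : (Finset.univ.filter (fun i : Fin n => G.Adj w (f i) ∧ (Pp : ℕ) < i ∧ (i : ℕ) < R)).Nonempty :=
    ⟨q, Finset.mem_filter.2 ⟨Finset.mem_univ _, hwq, hPq, hRq⟩⟩
  set Qm := (Finset.univ.filter (fun i : Fin n => G.Adj w (f i) ∧ (Pp : ℕ) < i ∧ (i : ℕ) < R)).min' hBne with hQdef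
  have hQspec : G.Adj w (f Qm) ∧ (Pp : ℕ) < Qm ∧ (Qm : ℕ) < R :=
    (Finset.mem_filter.1 (Finset.min'_mem _ hBne)).2
  have hQadj := hQspec.1
  have hPQ := hQspec.2.1
  have hQR := hQspec.2.2
  have hQmin : ∀ i : Fin n, G.Adj w (f i) → (Pp : ℕ) < i → (i : ℕ) < R → (Qm : ℕ) ≤ i := by
    intro i h1 h2 h3
    have hm : i ∈ Finset.univ.filter (fun i : Fin n => G.Adj w (f i) ∧ (Pp : ℕ) < i ∧ (i : ℕ) < R) :=
      Finset.mem_filter.2 ⟨Finset.mem_univ _, h1, h2, h3⟩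
    exact Finset.min'_le _ _ hm
  have hQq : (Qm : ℕ) ≤ q := hQmin q hwq hPq hRq
  -- no w-neighbour in [Pp, Qm)
  have hWlow : ∀ i : Fin n, G.Adj w (f i) → (Pp : ℕ) ≤ i → (i : ℕ) < Qm → False := by
    intro i h1 h2 h3
    rcases eq_or_lt_of_le h2 with h | h
    · have hiP : i = Pp := (hvalinj Pp i h).symm
      rw [hiP] at h1
      exact hdisj Pp ⟨hPadj, h1⟩
    · exact absurd (hQmin i h1 h (by omega)) (by omega)
  -- the common left path u, f Pp, ..., f Qm, w
  have hPpeta : (⟨(Pp : ℕ), Pp.isLt⟩ : Fin n) = Pp := Fin.eta _ _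
  have hQmeta : (⟨(Qm : ℕ), Qm.isLt⟩ : Fin n) = Qm := Fin.eta _ _
  rcases eq_or_lt_of_le (show (Qm : ℕ) + 1 ≤ (R : ℕ) by omega) with hD | hnD
  · -- degenerate case : R = Qm + 1, theta from f Qm to u
    obtain ⟨P1', hP1len, hP1int⟩ := exists_path_seg_end f u (Pp : ℕ) (Qm : ℕ) (by omega) Qm.isLt
      hfu (by rw [hPpeta]; exact hPadj)
      (fun i h1 h2 h3 => gap i h3 h1 (by omega)) (y := f Qm) (by rw [hQmeta])
    obtain ⟨P1, hP1i, hP1l⟩ := P1'.exists_rev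
    have hQmu : ¬ G.Adj (f Qm) u := fun h => gap Qm h.symm hPQ hQR
    obtain ⟨P2, hP2int, hP2len⟩ := exists_path4 (G := G) (v0 := f Qm) (v1 := w) (v2 := a) (v3 := u)
      hQadj.symm haw.symm hau
      (fun h => hanti Qm h.symm) hQmu (fun h => huw h.symm)
      (hfa Qm ∘ Eq.symm ∘ Eq.symm ∘ id ∘ id) (hfu Qm) (Ne.symm hne)
    obtain ⟨P3, hP3int, hP3len⟩ := exists_path3 (G := G) (v0 := f Qm) (v1 := f R) (v2 := u)
      (by rw [key]; omega) hRadj.symm hQmu (hfu Qm)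
    refine ⟨f Qm, u, P1, P2, P3, hfu Qm, hQmu, ?_, by omega, by omega, ?_, ?_, ?_, ?_, ?_, ?_⟩
    · rw [hP1l, hP1len]; omega
    · -- disjoint I1 I2
      rw [hP1i, hP2int, Set.disjoint_right]
      rintro v (rfl | rfl) hv <;> obtain ⟨i, _, _, hv'⟩ := (hP1int _).1 hv
      · exact hfw i hv'
      · exact hfa i hv'
    · rw [hP1i, hP3int, Set.disjoint_right]
      rintro v rfl hv
      obtain ⟨i, _, h2, hv'⟩ := (hP1int _).1 hv
      have := f.injective hv'
      subst this
      omega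
    · rw [hP2int, hP3int, Set.disjoint_left]
      rintro v (rfl | rfl) hv <;> rw [Set.mem_singleton_iff] at hv
      · exact hfw R hv.symm
      · exact hfa R hv.symm
    · rw [hP1i, hP2int]
      intro x hx y hy
      obtain ⟨i, _, _, hv'⟩ := (hP1int _).1 hx
      rcases hy with rfl | rfl
      · intro hadj
        rw [← hv'] at hadj
        exact hWlow i hadj.symm (by omega) (by omega)
      · intro hadj
        rw [← hv'] at hadj
        exact hanti i hadj.symm
    · rw [hP1i, hP3int]
      rintro x hx y rfl
      obtain ⟨i, _, h2, hv'⟩ := (hP1int _).1 hx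
      rw [← hv', key]
      omega
    · rw [hP2int, hP3int]
      rintro x hx y rfl
      rcases hx with rfl | rfl
      · exact fun h => hdisj R ⟨hRadj, h⟩
      · exact hanti R
  · -- R ≥ Qm + 2
    obtain ⟨P2, hP2len, hP2int⟩ := exists_path_seg f u w (Pp : ℕ) (Qm : ℕ) (by omega) Qm.isLt
      hfu hfw hne huw
      (by rw [hPpeta]; exact hPadj)
      (fun i h1 h2 => fun h => gap i h h1 (by omega))
      (by rw [hQmeta]; exact hQadj)
      (fun i h1 h2 => fun h => hWlow i h h1 h2)
    by_cases hI : ∃ j : Fin n, G.Adj w (f j) ∧ (Qm : ℕ) + 2 ≤ j ∧ (j : ℕ) < R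
    · -- case I : second w-attachment inside the gap
      have hJne : (Finset.univ.filter (fun i : Fin n => G.Adj w (f i) ∧ (Qm : ℕ) + 2 ≤ i ∧ (i : ℕ) < R)).Nonempty := by
        obtain ⟨j, h1, h2, h3⟩ := hI
        exact ⟨j, Finset.mem_filter.2 ⟨Finset.mem_univ _, h1, h2, h3⟩⟩
      set J := (Finset.univ.filter (fun i : Fin n => G.Adj w (f i) ∧ (Qm : ℕ) + 2 ≤ i ∧ (i : ℕ) < R)).max' hJne with hJdef
      have hJspec : G.Adj w (f J) ∧ (Qm : ℕ) + 2 ≤ J ∧ (J : ℕ) < R :=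
        (Finset.mem_filter.1 (Finset.max'_mem _ hJne)).2
      have hJadj := hJspec.1
      have hJlow := hJspec.2.1
      have hJR := hJspec.2.2
      have hJmax : ∀ i : Fin n, G.Adj w (f i) → (Qm : ℕ) + 2 ≤ i → (i : ℕ) < R → (i : ℕ) ≤ J := by
        intro i h1 h2 h3
        have hm : i ∈ Finset.univ.filter (fun i : Fin n => G.Adj w (f i) ∧ (Qm : ℕ) + 2 ≤ i ∧ (i : ℕ) < R) :=
          Finset.mem_filter.2 ⟨Finset.mem_univ _, h1, h2, h3⟩
        exact Finset.le_max' _ _ hm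
      have hWhigh : ∀ i : Fin n, G.Adj w (f i) → (J : ℕ) < i → (i : ℕ) ≤ R → False := by
        intro i h1 h2 h3
        rcases eq_or_lt_of_le h3 with h | h
        · have hiR : i = R := hvalinj i R h
          rw [hiR] at h1
          exact hdisj R ⟨hRadj, h1⟩
        · exact absurd (hJmax i h1 (by omega) h) (by omega)
      have hJeta : (⟨(J : ℕ), J.isLt⟩ : Fin n) = J := Fin.eta _ _
      obtain ⟨P3', hP3len, hP3int⟩ := exists_path_seg f w u (J : ℕ) (R : ℕ) (by omega) R.isLt
        hfw hfu (Ne.symm hne) (fun h => huw h.symm)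
        (by rw [hJeta]; exact hJadj)
        (fun i h1 h2 => fun h => hWhigh i h h1 (by omega))
        (by rw [Fin.eta]; exact hRadj)
        (fun i h1 h2 => fun h => gap i h (by omega) h2)
      obtain ⟨P3, hP3i, hP3l⟩ := P3'.exists_rev
      exact theta_of_segments f a u w hfa hanti hau haw huw hne
        (Pp : ℕ) (Qm : ℕ) (J : ℕ) (R : ℕ) (by omega) P2 P3 hP2len
        (by rw [hP3l]; exact hP3len)
        hP2int (by rw [hP3i]; exact hP3int)
    · -- case II.a : w-attachment beyond R
      push_neg at hI
      have hq' : ∃ j : Fin n, G.Adj w (f j) ∧ (R : ℕ) < j := by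
        rcases hW with ⟨j, hj, i, hi, hqi, hij⟩ | ⟨j, hj, hjq2, hnone⟩
        · exact ⟨j, hj, by have := hRmin i hi hqi; omega⟩
        · refine ⟨j, hj, ?_⟩
          rcases lt_trichotomy ((j : ℕ)) ((R : ℕ)) with h | h | h
          · exact absurd (hI j hj (by omega)) (by omega)
          · have hjR : j = R := hvalinj j R h
            rw [hjR] at hj
            exact absurd (hdisj R ⟨hRadj, hj⟩) (fun x => x)
          · exact h
      have hR2ne : (Finset.univ.filter (fun i : Fin n => G.Adj w (f i) ∧ (R : ℕ) < i)).Nonempty := by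
        obtain ⟨j, h1, h2⟩ := hq'
        exact ⟨j, Finset.mem_filter.2 ⟨Finset.mem_univ _, h1, h2⟩⟩
      set R2 := (Finset.univ.filter (fun i : Fin n => G.Adj w (f i) ∧ (R : ℕ) < i)).min' hR2ne with hR2def
      have hR2spec : G.Adj w (f R2) ∧ (R : ℕ) < R2 :=
        (Finset.mem_filter.1 (Finset.min'_mem _ hR2ne)).2
      have hR2adj := hR2spec.1
      have hRR2 := hR2spec.2
      have hR2min : ∀ i : Fin n, G.Adj w (f i) → (R : ℕ) < i → (R2 : ℕ) ≤ i := by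
        intro i h1 h2
        have hm : i ∈ Finset.univ.filter (fun i : Fin n => G.Adj w (f i) ∧ (R : ℕ) < i) :=
          Finset.mem_filter.2 ⟨Finset.mem_univ _, h1, h2⟩
        exact Finset.min'_le _ _ hm
      have hWgap2 : ∀ i : Fin n, G.Adj w (f i) → (R : ℕ) ≤ i → (i : ℕ) < R2 → False := by
        intro i h1 h2 h3
        rcases eq_or_lt_of_le h2 with h | h
        · have hiR : i = R := (hvalinj R i h).symm
          rw [hiR] at h1
          exact hdisj R ⟨hRadj, h1⟩
        · exact absurd (hR2min i h1 h) (by omega)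
      have hCne : (Finset.univ.filter (fun i : Fin n => G.Adj u (f i) ∧ (R : ℕ) ≤ i ∧ (i : ℕ) < R2)).Nonempty :=
        ⟨R, Finset.mem_filter.2 ⟨Finset.mem_univ _, hRadj, le_refl _, hRR2⟩⟩
      set CM := (Finset.univ.filter (fun i : Fin n => G.Adj u (f i) ∧ (R : ℕ) ≤ i ∧ (i : ℕ) < R2)).max' hCne with hCdef
      have hCspec : G.Adj u (f CM) ∧ (R : ℕ) ≤ CM ∧ (CM : ℕ) < R2 :=
        (Finset.mem_filter.1 (Finset.max'_mem _ hCne)).2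
      have hCadj := hCspec.1
      have hRC := hCspec.2.1
      have hCR2 := hCspec.2.2
      have hCmax : ∀ i : Fin n, G.Adj u (f i) → (R : ℕ) ≤ i → (i : ℕ) < R2 → (i : ℕ) ≤ CM := by
        intro i h1 h2 h3
        have hm : i ∈ Finset.univ.filter (fun i : Fin n => G.Adj u (f i) ∧ (R : ℕ) ≤ i ∧ (i : ℕ) < R2) :=
          Finset.mem_filter.2 ⟨Finset.mem_univ _, h1, h2, h3⟩
        exact Finset.le_max' _ _ hm
      have hUgap3 : ∀ i : Fin n, G.Adj u (f i) → (CM : ℕ) < i → (i : ℕ) ≤ R2 → False := by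
        intro i h1 h2 h3
        rcases eq_or_lt_of_le h3 with h | h
        · have hiR2 : i = R2 := hvalinj i R2 h
          rw [hiR2] at h1
          exact hdisj R2 ⟨h1, hR2adj⟩
        · exact absurd (hCmax i h1 (by omega) h) (by omega)
      obtain ⟨P3, hP3len, hP3int⟩ := exists_path_seg f u w (CM : ℕ) (R2 : ℕ) (by omega) R2.isLt
        hfu hfw hne huw
        (by rw [Fin.eta]; exact hCadj)
        (fun i h1 h2 => fun h => hUgap3 i h h1 h2)
        (by rw [Fin.eta]; exact hR2adj)
        (fun i h1 h2 => fun h => hWgap2 i h (by omega) h2)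
      exact theta_of_segments f a u w hfa hanti hau haw huw hne
        (Pp : ℕ) (Qm : ℕ) (CM : ℕ) (R2 : ℕ) (by omega) P2 P3 hP2len hP3len hP2int hP3int

lemma cross_theta_left {n : ℕ} (f : pathGraph n ↪g G) (a u w : V)
    (hfa : ∀ i : Fin n, f i ≠ a) (hfu : ∀ i : Fin n, f i ≠ u) (hfw : ∀ i : Fin n, f i ≠ w)
    (hanti : ∀ i : Fin n, ¬ G.Adj a (f i))
    (hau : G.Adj a u) (haw : G.Adj a w) (huw : ¬ G.Adj u w) (hne : u ≠ w)
    (hdisj : ∀ i : Fin n, ¬ (G.Adj u (f i) ∧ G.Adj w (f i)))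
    (p q : Fin n) (hqp : (q : ℕ) < p)
    (hup : G.Adj u (f p)) (hwq : G.Adj w (f q))
    (hr : ∃ i : Fin n, G.Adj u (f i) ∧ (i : ℕ) < q)
    (hW : (∃ j : Fin n, G.Adj w (f j) ∧ ∃ i : Fin n, G.Adj u (f i) ∧ (i : ℕ) < q ∧ (j : ℕ) < i) ∨
          (∃ j : Fin n, G.Adj w (f j) ∧ (j : ℕ) + 2 ≤ q ∧
            ∀ i : Fin n, G.Adj u (f i) → ¬ ((j : ℕ) < i ∧ (i : ℕ) < q))) :
    HasTheta G := by
  set e := (pathGraphRev n).toEmbedding with hedef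
  set f' := f.comp e with hf'def
  have happ : ∀ i, f' i = f (e i) := fun _ => rfl
  have hev : ∀ i : Fin n, (e i : ℕ) = n - 1 - (i : ℕ) := fun i => rfl
  have hee : ∀ i : Fin n, e (e i) = i := by
    intro i
    ext
    rw [hev, hev]
    have := i.isLt
    omega
  have hval : ∀ i : Fin n, f' (e i) = f i := by
    intro i
    rw [happ, hee]
  refine cross_theta_right f' a u w
    (fun i => hfa (e i)) (fun i => hfu (e i)) (fun i => hfw (e i))
    (fun i => hanti (e i)) hau haw huw hne
    (fun i => hdisj (e i)) (e p) (e q) ?_ ?_ ?_ ?_ ?_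
  · rw [hev, hev]
    have := p.isLt; have := q.isLt
    omega
  · rw [hval]; exact hup
  · rw [hval]; exact hwq
  · obtain ⟨i, h1, h2⟩ := hr
    refine ⟨e i, by rw [hval]; exact h1, ?_⟩
    rw [hev, hev]
    have := i.isLt; have := q.isLt
    omega
  · rcases hW with ⟨j, h1, i, h2, h3, h4⟩ | ⟨j, h1, h2, h3⟩
    · refine Or.inl ⟨e j, by rw [hval]; exact h1, e i, by rw [hval]; exact h2, ?_, ?_⟩
      · rw [hev, hev]
        have := i.isLt; have := q.isLt
        omega
      · rw [hev, hev]
        have := i.isLt; have := j.isLt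
        omega
    · refine Or.inr ⟨e j, by rw [hval]; exact h1, ?_, ?_⟩
      · rw [hev, hev]
        have := j.isLt; have := q.isLt
        omega
      · intro i hi hcon
        rw [hev, hev] at hcon
        have hiu : G.Adj u (f (e i)) := by rw [← hval (e i), hee]; exact hi
        have := h3 (e i) hiu
        rw [hev] at this
        have := i.isLt; have := j.isLt; have := q.isLt
        omega

lemma cross_theta {n : ℕ} (f : pathGraph n ↪g G) (a u w : V)
    (hfa : ∀ i : Fin n, f i ≠ a) (hfu : ∀ i : Fin n, f i ≠ u) (hfw : ∀ i : Fin n, f i ≠ w)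
    (hanti : ∀ i : Fin n, ¬ G.Adj a (f i))
    (hau : G.Adj a u) (haw : G.Adj a w) (huw : ¬ G.Adj u w) (hne : u ≠ w)
    (hdisj : ∀ i : Fin n, ¬ (G.Adj u (f i) ∧ G.Adj w (f i)))
    (p q r : Fin n) (hpq : (p : ℕ) < q) (hqr : (q : ℕ) < r)
    (hup : G.Adj u (f p)) (hwq : G.Adj w (f q)) (hur : G.Adj u (f r))
    (hugly : ∃ i j : Fin n, G.Adj w (f i) ∧ G.Adj w (f j) ∧ (i : ℕ) + 2 ≤ j) :
    HasTheta G := by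
  classical
  have hvalinj : ∀ i j : Fin n, (i : ℕ) = (j : ℕ) → i = j := fun i j h => Fin.ext h
  -- refined bounds
  have hRne : (Finset.univ.filter (fun i : Fin n => G.Adj u (f i) ∧ (q : ℕ) < i)).Nonempty :=
    ⟨r, Finset.mem_filter.2 ⟨Finset.mem_univ _, hur, hqr⟩⟩
  set R := (Finset.univ.filter (fun i : Fin n => G.Adj u (f i) ∧ (q : ℕ) < i)).min' hRne with hRdef
  have hRspec : G.Adj u (f R) ∧ (q : ℕ) < R :=
    (Finset.mem_filter.1 (Finset.min'_mem _ hRne)).2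
  have hRmin : ∀ i : Fin n, G.Adj u (f i) → (q : ℕ) < i → (R : ℕ) ≤ i := by
    intro i h1 h2
    have hm : i ∈ Finset.univ.filter (fun i : Fin n => G.Adj u (f i) ∧ (q : ℕ) < i) :=
      Finset.mem_filter.2 ⟨Finset.mem_univ _, h1, h2⟩
    exact Finset.min'_le _ _ hm
  have hPne : (Finset.univ.filter (fun i : Fin n => G.Adj u (f i) ∧ (i : ℕ) < q)).Nonempty :=
    ⟨p, Finset.mem_filter.2 ⟨Finset.mem_univ _, hup, hpq⟩⟩
  set Pp := (Finset.univ.filter (fun i : Fin n => G.Adj u (f i) ∧ (i : ℕ) < q)).max' hPne with hPdef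
  have hPspec : G.Adj u (f Pp) ∧ (Pp : ℕ) < q :=
    (Finset.mem_filter.1 (Finset.max'_mem _ hPne)).2
  have hPmax : ∀ i : Fin n, G.Adj u (f i) → (i : ℕ) < q → (i : ℕ) ≤ Pp := by
    intro i h1 h2
    have hm : i ∈ Finset.univ.filter (fun i : Fin n => G.Adj u (f i) ∧ (i : ℕ) < q) :=
      Finset.mem_filter.2 ⟨Finset.mem_univ _, h1, h2⟩
    exact Finset.le_max' _ _ hm
  have gap : ∀ i : Fin n, G.Adj u (f i) → (Pp : ℕ) < i → (i : ℕ) < R → False := by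
    intro i h1 h2 h3
    rcases lt_trichotomy ((i : ℕ)) ((q : ℕ)) with h | h | h
    · exact absurd (hPmax i h1 h) (by omega)
    · have hiq : i = q := hvalinj i q h
      rw [hiq] at h1
      exact hdisj q ⟨h1, hwq⟩
    · exact absurd (hRmin i h1 h) (by omega)
  by_cases hc1 : ∃ j : Fin n, G.Adj w (f j) ∧ (R : ℕ) < j
  · obtain ⟨j, h1, h2⟩ := hc1
    exact cross_theta_right f a u w hfa hfu hfw hanti hau haw huw hne hdisj p q hpq hup hwq
      ⟨r, hur, hqr⟩ (Or.inl ⟨j, h1, R, hRspec.1, hRspec.2, h2⟩)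
  by_cases hc2 : ∃ j : Fin n, G.Adj w (f j) ∧ (j : ℕ) < Pp
  · obtain ⟨j, h1, h2⟩ := hc2
    exact cross_theta_left f a u w hfa hfu hfw hanti hau haw huw hne hdisj r q hqr hur hwq
      ⟨p, hup, hpq⟩ (Or.inl ⟨j, h1, Pp, hPspec.1, hPspec.2, h2⟩)
  · push_neg at hc1 hc2
    obtain ⟨j₁, j₂, hj₁, hj₂, hj12⟩ := hugly
    have hbound : ∀ j : Fin n, G.Adj w (f j) → (Pp : ℕ) < j ∧ (j : ℕ) < R := by
      intro j hj
      have h1 := hc1 j hj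
      have h2 := hc2 j hj
      constructor
      · rcases eq_or_lt_of_le h2 with h | h
        · exfalso
          have hjP : j = Pp := (hvalinj Pp j h).symm
          rw [hjP] at hj
          exact hdisj Pp ⟨hPspec.1, hj⟩
        · exact h
      · rcases eq_or_lt_of_le h1 with h | h
        · exfalso
          have hjR : j = R := hvalinj j R h
          rw [hjR] at hj
          exact hdisj R ⟨hRspec.1, hj⟩
        · exact h
    obtain ⟨hPj₁, hj₁R⟩ := hbound j₁ hj₁
    obtain ⟨hPj₂, hj₂R⟩ := hbound j₂ hj₂
    refine cross_theta_right f a u w hfa hfu hfw hanti hau haw huw hne hdisj Pp j₁ hPj₁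
      hPspec.1 hj₁ ⟨R, hRspec.1, hj₁R⟩ (Or.inr ⟨j₂, hj₂, by omega, ?_⟩)
    intro i hi hcon
    exact gap i hi (by omega) (by omega)

end Helpers

/-- let `G` be theta-free, `(a, S, {L})` an `(s,1)`-palanquin in `G` and
`x` an end of `L`. If no two vertices of `S` have a common neighbor in `L`, and all
vertices of `S` are `L`-bad or all are `L`-ugly, then there is a bijection `π` making
`(S, L, x, π)` an `s`-alignment in `G`. -/
theorem statement_13 (s : ℕ) (hs : 1 ≤ s) {V : Type} [Fintype V] (G : SimpleGraph V)
    (hTheta : ¬ HasTheta G) (P : Palanquin G s 1) (x : V)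
    (hx : x = (P.L 0).first ∨ x = (P.L 0).last)
    (hcom : ∀ u ∈ P.S, ∀ w ∈ P.S, u ≠ w →
      ¬ ∃ u' ∈ (P.L 0).support, G.Adj u u' ∧ G.Adj w u')
    (hbu : (∀ u ∈ P.S, BadFor G (P.L 0).support u) ∨
           (∀ u ∈ P.S, UglyFor G (P.L 0).support u)) :
    ∃ π : Fin s → V, IsAlignment G s P.S (P.L 0) x π := by
  classical
  set L := P.L 0 with hLdef
  have key : ∀ i j : Fin L.n, G.Adj (L.f i) (L.f j) ↔
      ((i : ℕ) + 1 = (j : ℕ) ∨ (j : ℕ) + 1 = (i : ℕ)) := by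
    intro i j
    rw [L.f.map_rel_iff, pathGraph_adj]
  have hsupp : ∀ i : Fin L.n, L.f i ∈ L.support := fun i => ⟨i, rfl⟩
  have havoid := P.avoid 0
  have hfS : ∀ v ∈ P.S, ∀ i : Fin L.n, L.f i ≠ v := by
    intro v hv i h
    exact Set.disjoint_left.1 havoid (hsupp i) (by rw [h]; exact Set.mem_insert_of_mem _ hv)
  have hfa : ∀ i : Fin L.n, L.f i ≠ P.a := by
    intro i h
    exact Set.disjoint_left.1 havoid (hsupp i) (by rw [h]; exact Set.mem_insert _ _)
  have hanti : ∀ i : Fin L.n, ¬ G.Adj P.a (L.f i) := fun i => P.anti 0 _ (hsupp i)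
  have hadjA : ∀ v ∈ P.S, G.Adj P.a v := fun v hv => P.sub hv
  have hdisjPair : ∀ u ∈ P.S, ∀ w ∈ P.S, u ≠ w →
      ∀ i : Fin L.n, ¬ (G.Adj u (L.f i) ∧ G.Adj w (L.f i)) := by
    rintro u hu w hw huw i ⟨h1, h2⟩
    exact hcom u hu w hw huw ⟨L.f i, hsupp i, h1, h2⟩
  -- no crossing
  have hnc : ∀ u ∈ P.S, ∀ w ∈ P.S, u ≠ w → ∀ p q r : Fin L.n,
      G.Adj u (L.f p) → G.Adj w (L.f q) → G.Adj u (L.f r) →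
      (p : ℕ) < q → (q : ℕ) < r → False := by
    intro u hu w hw hne p q r hp hq hr h1 h2
    rcases hbu with hbad | hugly
    · obtain ⟨hclq, _⟩ := hbad u hu
      have hmem1 : L.f p ∈ NbrsIn G L.support u := ⟨hsupp p, hp⟩
      have hmem2 : L.f r ∈ NbrsIn G L.support u := ⟨hsupp r, hr⟩
      have hne' : L.f p ≠ L.f r := by
        intro h
        have := L.f.injective h
        subst this
        omega
      have hadj := hclq hmem1 hmem2 hne'
      rw [key] at hadj
      omega
    · have hug := hugly w hw
      rw [UglyFor, SimpleGraph.isClique_iff, Set.Pairwise] at hug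
      push_neg at hug
      obtain ⟨xx, hxx, yy, hyy, hxy, hnadj⟩ := hug
      obtain ⟨⟨i, rfl⟩, hxadj⟩ := hxx
      obtain ⟨⟨j, rfl⟩, hyadj⟩ := hyy
      have hij : (i : ℕ) ≠ (j : ℕ) := by
        intro h
        exact hxy (congrArg L.f (Fin.ext h))
      have hnotadj : ¬ ((i : ℕ) + 1 = (j : ℕ) ∨ (j : ℕ) + 1 = (i : ℕ)) := by
        intro h
        exact hnadj ((key i j).2 h)
      have hwi : G.Adj w (L.f i) := hxadj
      have hwj : G.Adj w (L.f j) := hyadj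
      have hugpair : ∃ i' j' : Fin L.n, G.Adj w (L.f i') ∧ G.Adj w (L.f j') ∧
          (i' : ℕ) + 2 ≤ j' := by
        rcases lt_or_gt_of_ne hij with h | h
        · exact ⟨i, j, hwi, hwj, by omega⟩
        · exact ⟨j, i, hwj, hwi, by omega⟩
      exact hTheta (cross_theta L.f P.a u w hfa (hfS u hu) (hfS w hw) hanti
        (hadjA u hu) (hadjA w hw) (P.stable u hu w hw) hne (hdisjPair u hu w hw hne)
        p q r h1 h2 hp hq hr hugpair)
  -- attachment sets
  set A : V → Finset (Fin L.n) := fun v => Finset.univ.filter (fun i => G.Adj v (L.f i)) with hA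
  have hAmem : ∀ v i, i ∈ A v ↔ G.Adj v (L.f i) := by
    intro v i
    simp [hA]
  have hAne : ∀ v ∈ P.S, (A v).Nonempty := by
    intro v hv
    obtain ⟨u', hu', hadj⟩ := P.nbr v hv 0
    obtain ⟨i, rfl⟩ := hu'
    exact ⟨i, (hAmem v i).2 hadj⟩
  -- separation
  have hsep : ∀ u ∈ P.S, ∀ w ∈ P.S, u ≠ w →
      (∀ i ∈ A u, ∀ j ∈ A w, (i : ℕ) < j) ∨ (∀ i ∈ A u, ∀ j ∈ A w, (j : ℕ) < i) := by
    intro u hu w hw hne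
    by_contra hcon
    push_neg at hcon
    obtain ⟨⟨i₀, hi₀, j₀, hj₀, h₀⟩, ⟨i₁, hi₁, j₁, hj₁, h₁⟩⟩ := hcon
    rw [hAmem] at hi₀ hi₁ hj₀ hj₁
    have hne₀ : (j₀ : ℕ) ≠ (i₀ : ℕ) := by
      intro h
      have : j₀ = i₀ := Fin.ext h
      rw [this] at hj₀
      exact hdisjPair u hu w hw hne i₀ ⟨hi₀, hj₀⟩
    have hne₁ : (i₁ : ℕ) ≠ (j₁ : ℕ) := by
      intro h
      have : i₁ = j₁ := Fin.ext h
      rw [this] at hi₁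
      exact hdisjPair u hu w hw hne j₁ ⟨hi₁, hj₁⟩
    rcases lt_or_ge ((i₁ : ℕ)) ((j₀ : ℕ)) with h | h
    · exact hnc u hu w hw hne i₁ j₀ i₀ hi₁ hj₀ hi₀ h (by omega)
    · have hne₂ : (j₀ : ℕ) ≠ (i₁ : ℕ) := by
        intro hh
        have : j₀ = i₁ := Fin.ext hh
        rw [this] at hj₀
        exact hdisjPair u hu w hw hne i₁ ⟨hi₁, hj₀⟩
      exact hnc w hw u hu (Ne.symm hne) j₀ i₁ j₁ hj₀ hi₁ hj₁ (by omega) (by omega)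
  -- key function
  set keyF : V → ℕ := fun v => if h : (A v).Nonempty then ((A v).min' h : ℕ) else 0 with hkeyF
  have hkeyval : ∀ v (h : (A v).Nonempty), keyF v = ((A v).min' h : ℕ) := by
    intro v h
    simp [hkeyF, dif_pos h]
  have harm : ∀ u ∈ P.S, ∀ w ∈ P.S,
      (∀ i ∈ A u, ∀ j ∈ A w, (i : ℕ) < j) → keyF u < keyF w := by
    intro u hu w hw h
    rw [hkeyval u (hAne u hu), hkeyval w (hAne w hw)]
    exact h _ (Finset.min'_mem _ _) _ (Finset.min'_mem _ _)
  have hkey_lt : ∀ u ∈ P.S, ∀ w ∈ P.S, u ≠ w → keyF u < keyF w →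
      (∀ i ∈ A u, ∀ j ∈ A w, (i : ℕ) < j) := by
    intro u hu w hw hne hlt
    rcases hsep u hu w hw hne with h | h
    · exact h
    · exact absurd (harm w hw u hu (fun i hi j hj => h j hj i hi)) (by omega)
  have hkeyinj : ∀ u ∈ P.S, ∀ w ∈ P.S, keyF u = keyF w → u = w := by
    intro u hu w hw h
    by_contra hne
    rcases hsep u hu w hw hne with h' | h'
    · exact absurd (harm u hu w hw h') (by omega)
    · exact absurd (harm w hw u hu (fun i hi j hj => h' j hj i hi)) (by omega)
  -- enumeration
  have hSfin : P.S.Finite := Set.toFinite _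
  set T := hSfin.toFinset with hT
  have hTmem : ∀ v, v ∈ T ↔ v ∈ P.S := fun v => hSfin.mem_toFinset
  have hTcard : T.card = s := by
    rw [← P.card, Set.ncard_eq_toFinset_card']
    congr 1
    apply Finset.ext
    intro v
    rw [hTmem, Set.mem_toFinset]
  set K := T.image keyF with hK
  have hKcard : K.card = s := by
    rw [hK, Finset.card_image_of_injOn, hTcard]
    intro u hu w hw h
    exact hkeyinj u ((hTmem u).1 hu) w ((hTmem w).1 hw) h
  set e := K.orderIsoOfFin hKcard with he
  have hex : ∀ i : Fin s, ∃! v, v ∈ P.S ∧ keyF v = ((e i : K) : ℕ) := by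
    intro i
    have hmem : ((e i : K) : ℕ) ∈ Finset.image keyF T := (e i).2
    obtain ⟨v, hv, hkv⟩ := Finset.mem_image.1 hmem
    refine ⟨v, ⟨(hTmem v).1 hv, hkv⟩, ?_⟩
    rintro y ⟨hy, hky⟩
    exact hkeyinj y hy v ((hTmem v).1 hv) (by rw [hky, hkv])
  set π : Fin s → V := fun i => (hex i).choose with hπ
  have hπspec : ∀ i : Fin s, π i ∈ P.S ∧ keyF (π i) = ((e i : K) : ℕ) := fun i =>
    (hex i).choose_spec.1
  have hπuniq : ∀ i : Fin s, ∀ y, y ∈ P.S ∧ keyF y = ((e i : K) : ℕ) → y = π i := fun i =>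
    (hex i).choose_spec.2
  have hπinj : Function.Injective π := by
    intro i j h
    have h1 := (hπspec i).2
    have h2 := (hπspec j).2
    rw [h] at h1
    have : (e i : K) = (e j : K) := Subtype.ext (by rw [← h1, ← h2])
    exact e.injective this
  have hπrange : Set.range π = P.S := by
    apply Set.eq_of_subset_of_subset
    · rintro v ⟨i, rfl⟩
      exact (hπspec i).1
    · intro v hv
      have hkv : keyF v ∈ K :=
        Finset.mem_image.2 ⟨v, (hTmem v).2 hv, rfl⟩
      obtain ⟨i, hi⟩ := e.surjective ⟨keyF v, hkv⟩
      refine ⟨i, (hπuniq i v ⟨hv, ?_⟩).symm⟩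
      rw [hi]
  have hπmono : ∀ i j : Fin s, i < j → keyF (π i) < keyF (π j) := by
    intro i j hij
    rw [(hπspec i).2, (hπspec j).2]
    exact e.strictMono hij
  have hπne : ∀ i j : Fin s, i < j → π i ≠ π j := by
    intro i j hij h
    have := hπmono i j hij
    rw [h] at this
    omega
  -- the order condition
  have hord : ∀ (i j : Fin s), i < j → ∀ ii jj : Fin L.n,
      G.Adj (π i) (L.f ii) → G.Adj (π j) (L.f jj) → (ii : ℕ) < (jj : ℕ) := by
    intro i j hij ii jj hadi hadj
    exact hkey_lt (π i) (hπspec i).1 (π j) (hπspec j).1 (hπne i j hij)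
      (hπmono i j hij) ii ((hAmem _ ii).2 hadi) jj ((hAmem _ jj).2 hadj)
  have hdisjS : Disjoint P.S L.support :=
    Set.disjoint_of_subset_left (Set.subset_insert _ _) havoid.symm
  rcases hx with hxf | hxl
  · refine ⟨π, P.stable, P.card, hπinj, hπrange, hdisjS, fun u hu => P.nbr u hu 0, Or.inl ⟨hxf, ?_⟩⟩
    intro i j hij ii jj h1 h2
    simpa using hord i j hij ii jj h1 h2
  · refine ⟨π ∘ Fin.rev, P.stable, P.card, hπinj.comp Fin.rev_injective, ?_, hdisjS,
      fun u hu => P.nbr u hu 0, Or.inr ⟨hxl, ?_⟩⟩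
    · rw [Set.range_comp, Fin.rev_surjective.range_eq, Set.image_univ, hπrange]
    · intro i j hij ii jj h1 h2
      have hrev : j.rev < i.rev := by
        rw [Fin.rev_lt_rev]
        exact hij
      simpa using hord j.rev i.rev hrev jj ii h2 h1
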